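/- (Rotated error and projection probability, [E,H]=0, {E,X}=0 case.) Let E be a Hermitian N×N matrix with E² = I, E·H = H·E and E·X = −X·E, and let ψ̄ be a unit vector with P0·ψ̄ = ψ̄. Then for all t: (i) E(t) = U(t)†·E·U(t) = cos(2ωt)·E + i·sin(2ωt)·exp(2i·θ̄(t)·H)·E·X, and (ii) ⟨E(t)·ψ̄, (E·X·P0·X·E)·E(t)·ψ̄⟩ = sin²(2ωt). -/

import Mathlib

open Matrix

variable {n : ℕ}

open Nat in
lemma exp_smul_sq_one {n : ℕ} (A : Matrix (Fin n) (Fin n) ℂ) (hA : A * A = 1) (z : ℂ) :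
    NormedSpace.exp (z • A) = Complex.cosh z • (1 : Matrix (Fin n) (Fin n) ℂ) + Complex.sinh z • A := by
  have hApow : ∀ k : ℕ, A ^ (2 * k) = 1 := fun k => by rw [pow_mul, pow_two, hA, one_pow]
  have hfac : ∀ m : ℕ, ((m ! : ℂ)) ≠ 0 := fun m => Nat.cast_ne_zero.2 (Nat.factorial_ne_zero m)
  have hterm : ∀ m : ℕ, ((m ! : ℂ)⁻¹) • (z • A) ^ m
      = ((z ^ m / (m ! : ℂ) + (-z) ^ m / (m ! : ℂ)) / 2) • (1 : Matrix (Fin n) (Fin n) ℂ)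
        + ((z ^ m / (m ! : ℂ) - (-z) ^ m / (m ! : ℂ)) / 2) • A := by
    intro m
    rw [smul_pow]
    rcases Nat.even_or_odd m with ⟨k, hk⟩ | ⟨k, hk⟩
    · have h1 : (-z) ^ m = z ^ m := Even.neg_pow ⟨k, hk⟩ z
      have h2 : A ^ m = 1 := by rw [hk, ← two_mul, hApow]
      rw [h1, h2, smul_smul]
      have : (z ^ m / ↑m ! - z ^ m / ↑m !) / 2 = 0 := by ring
      rw [this, zero_smul, add_zero]
      congr 1
      field_simp
      ring
    · have h1 : (-z) ^ m = -(z ^ m) := Odd.neg_pow ⟨k, hk⟩ z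
      have h2 : A ^ m = A := by rw [hk, pow_add, hApow, one_mul, pow_one]
      rw [h1, h2, smul_smul]
      have : (z ^ m / ↑m ! + -z ^ m / ↑m !) / 2 = 0 := by ring
      rw [this, zero_smul, zero_add]
      congr 1
      field_simp
      ring
  have hs1 : Summable (fun m : ℕ => z ^ m / (m ! : ℂ)) := NormedSpace.expSeries_div_summable z
  have hs2 : Summable (fun m : ℕ => (-z) ^ m / (m ! : ℂ)) := NormedSpace.expSeries_div_summable (-z)
  have hsa : Summable (fun m : ℕ => (z ^ m / (m ! : ℂ) + (-z) ^ m / (m ! : ℂ)) / 2) := (hs1.add hs2).div_const 2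
  have hsb : Summable (fun m : ℕ => (z ^ m / (m ! : ℂ) - (-z) ^ m / (m ! : ℂ)) / 2) := (hs1.sub hs2).div_const 2
  have hexp : ∀ w : ℂ, ∑' m : ℕ, w ^ m / (m ! : ℂ) = Complex.exp w := by
    intro w
    rw [Complex.exp_eq_exp_ℂ, NormedSpace.exp_eq_tsum_div]
  simp only [NormedSpace.exp_eq_tsum (𝕂 := ℂ)]
  rw [tsum_congr hterm, Summable.tsum_add (hsa.smul_const _) (hsb.smul_const _),
    Summable.tsum_smul_const hsa, Summable.tsum_smul_const hsb, tsum_div_const, tsum_div_const,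
    Summable.tsum_add hs1 hs2, Summable.tsum_sub hs1 hs2, hexp, hexp]
  rfl

lemma mexp_comm{A B : Matrix (Fin n) (Fin n) ℂ} (hA : A * A = 1) (h : B * A = A * B) (z : ℂ) :
    B * NormedSpace.exp (z • A) = NormedSpace.exp (z • A) * B := by
  rw [exp_smul_sq_one A hA]
  simp only [Matrix.mul_add, Matrix.add_mul, mul_smul_comm, smul_mul_assoc,
    Matrix.mul_one, Matrix.one_mul, h]

lemma mexp_comm' {A B : Matrix (Fin n) (Fin n) ℂ} (hA : A * A = 1) (h : B * A = A * B) (z : ℂ)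
    (C : Matrix (Fin n) (Fin n) ℂ) :
    B * (NormedSpace.exp (z • A) * C) = NormedSpace.exp (z • A) * (B * C) := by
  rw [← Matrix.mul_assoc, mexp_comm hA h, Matrix.mul_assoc]

lemma mexp_anti {A B : Matrix (Fin n) (Fin n) ℂ} (hA : A * A = 1) (h : B * A = -(A * B)) (z : ℂ) :
    B * NormedSpace.exp (z • A) = NormedSpace.exp ((-z) • A) * B := by
  rw [exp_smul_sq_one A hA, exp_smul_sq_one A hA]
  simp only [Complex.cosh_neg, Complex.sinh_neg, Matrix.mul_add, Matrix.add_mul,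
    mul_smul_comm, smul_mul_assoc, Matrix.mul_one, Matrix.one_mul, h,
    smul_neg, neg_smul]
  simp only [neg_mul, smul_mul_assoc]

lemma mexp_anti' {A B : Matrix (Fin n) (Fin n) ℂ} (hA : A * A = 1) (h : B * A = -(A * B)) (z : ℂ)
    (C : Matrix (Fin n) (Fin n) ℂ) :
    B * (NormedSpace.exp (z • A) * C) = NormedSpace.exp ((-z) • A) * (B * C) := by
  rw [← Matrix.mul_assoc, mexp_anti hA h, Matrix.mul_assoc]

lemma mexp_mul (A : Matrix (Fin n) (Fin n) ℂ) (hA : A * A = 1) (z w : ℂ) :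
    NormedSpace.exp (z • A) * NormedSpace.exp (w • A) = NormedSpace.exp ((z + w) • A) := by
  rw [exp_smul_sq_one A hA, exp_smul_sq_one A hA, exp_smul_sq_one A hA,
    Complex.cosh_add, Complex.sinh_add]
  simp only [Matrix.mul_add, Matrix.add_mul, mul_smul_comm, smul_mul_assoc,
    Matrix.mul_one, Matrix.one_mul, hA, smul_smul, smul_add, add_smul]
  module

lemma mexp_mul' (A : Matrix (Fin n) (Fin n) ℂ) (hA : A * A = 1) (z w : ℂ)
    (C : Matrix (Fin n) (Fin n) ℂ) :
    NormedSpace.exp (z • A) * (NormedSpace.exp (w • A) * C)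
      = NormedSpace.exp ((z + w) • A) * C := by
  rw [← Matrix.mul_assoc, mexp_mul A hA]

lemma mexp_zero (A : Matrix (Fin n) (Fin n) ℂ) (hA : A * A = 1) :
    NormedSpace.exp ((0 : ℂ) • A) = 1 := by
  rw [exp_smul_sq_one A hA]
  simp

lemma mexp_conj (A : Matrix (Fin n) (Fin n) ℂ) (hA : A * A = 1) (hAh : Aᴴ = A) (z : ℂ) :
    (NormedSpace.exp (z • A))ᴴ = NormedSpace.exp ((starRingEnd ℂ z) • A) := by
  rw [exp_smul_sq_one A hA, exp_smul_sq_one A hA]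
  simp only [conjTranspose_add, conjTranspose_smul, conjTranspose_one, hAh,
    Complex.cosh_conj, Complex.sinh_conj]
  rfl

lemma rotate_calc (H X E : Matrix (Fin n) (Fin n) ℂ)
    (hH2 : H * H = 1) (hX2 : X * X = 1) (hHh : Hᴴ = H) (hXh : Xᴴ = X)
    (hHX : H * X = -(X * H)) (hEH : E * H = H * E) (hEX : E * X = -(X * E))
    (a b c : ℂ) (ha : starRingEnd ℂ a = -a) (hb : starRingEnd ℂ b = -b) (hc : starRingEnd ℂ c = -c) :
    (NormedSpace.exp (a • H) * NormedSpace.exp (b • X) * NormedSpace.exp ((-c) • H))ᴴ * E *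
      (NormedSpace.exp (a • H) * NormedSpace.exp (b • X) * NormedSpace.exp ((-c) • H))
    = Complex.cosh (b + b) • E
      + Complex.sinh (b + b) • (NormedSpace.exp ((c + c) • H) * (E * X)) := by
  have hXH : X * H = -(H * X) := by rw [hHX, neg_neg]
  have hXE : X * E = -(E * X) := by rw [hEX, neg_neg]
  rw [conjTranspose_mul, conjTranspose_mul, mexp_conj H hH2 hHh, mexp_conj X hX2 hXh,
    mexp_conj H hH2 hHh, map_neg, ha, hb, hc, neg_neg]
  simp only [Matrix.mul_assoc]
  rw [mexp_comm' hH2 hEH a, mexp_mul' H hH2 (-a) a, neg_add_cancel, mexp_zero H hH2,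
    Matrix.one_mul, mexp_anti' hX2 hEX b, mexp_mul' X hX2 (-b) (-b), mexp_comm hH2 hEH (-c)]
  rw [show (-b + -b : ℂ) = -(b + b) by ring, exp_smul_sq_one X hX2, Complex.cosh_neg,
    Complex.sinh_neg]
  simp only [Matrix.add_mul, Matrix.mul_add, smul_mul_assoc, mul_smul_comm, Matrix.one_mul,
    ← neg_smul, neg_mul, mul_neg, smul_neg, neg_neg, mexp_anti' hH2 hXH, hXE,
    mexp_mul' H hH2, mexp_mul H hH2, mexp_comm hH2 hEH, mexp_comm' hH2 hEH,
    add_neg_cancel, mexp_zero H hH2, Matrix.mul_one]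

lemma sandwich_calc (H X E P0 : Matrix (Fin n) (Fin n) ℂ)
    (hH2 : H * H = 1) (hX2 : X * X = 1) (hE2 : E * E = 1)
    (hHX : H * X = -(X * H)) (hEH : E * H = H * E) (hEX : E * X = -(X * E))
    (hP0proj : P0 * P0 = P0) (hP0H : P0 * H = H * P0) (hPXP : P0 * X * P0 = 0)
    (d u v : ℂ) :
    P0 * ((u • E + v • (NormedSpace.exp (d • H) * (E * X))) *
      ((E * X * P0 * X * E) * ((u • E + v • (NormedSpace.exp (d • H) * (E * X))) * P0)))
    = (-(v * v)) • P0 := by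
  have hXH : X * H = -(H * X) := by rw [hHX, neg_neg]
  have hXE : X * E = -(E * X) := by rw [hEX, neg_neg]
  have EE : ∀ C, E * (E * C) = C := fun C => by rw [← Matrix.mul_assoc, hE2, Matrix.one_mul]
  have XX : ∀ C, X * (X * C) = C := fun C => by rw [← Matrix.mul_assoc, hX2, Matrix.one_mul]
  have PP : ∀ C, P0 * (P0 * C) = P0 * C := fun C => by
    rw [← Matrix.mul_assoc, hP0proj]
  have PXP : ∀ C, P0 * (X * (P0 * C)) = 0 := fun C => by
    rw [← Matrix.mul_assoc, ← Matrix.mul_assoc, hPXP, Matrix.zero_mul]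
  have PXP' : P0 * (X * P0) = 0 := by rw [← Matrix.mul_assoc, hPXP]
  have xe3 : ∀ C, X * (E * C) = -(E * (X * C)) := fun C => by
    rw [← Matrix.mul_assoc, ← Matrix.mul_assoc, hXE, Matrix.neg_mul]
  simp only [Matrix.mul_add, Matrix.add_mul, smul_mul_assoc, mul_smul_comm, smul_smul,
    Matrix.mul_assoc]
  simp only [EE, XX, PP, PXP, PXP', xe3, hXE, hE2, hX2, hP0proj,
    mexp_comm' hH2 hEH, mexp_comm hH2 hEH, mexp_anti' hH2 hXH, mexp_anti hH2 hXH,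
    mexp_comm' hH2 hP0H, mexp_comm hH2 hP0H, mexp_mul' H hH2, mexp_mul H hH2,
    neg_add_cancel, add_neg_cancel, neg_neg, mexp_zero H hH2, Matrix.one_mul, Matrix.mul_one,
    mul_neg, neg_mul, smul_neg, Matrix.mul_zero, Matrix.zero_mul, smul_zero, zero_add, add_zero]
  module

/-- Rotated error and projection probability for `[E,H] = 0`, `{E,X} = 0`:
(i) `E(t) = cos(2ωt)·E + i·sin(2ωt)·exp(2i θ̄(t) H)·E·X`, and
(ii) `⟨E(t)ψ̄, (E·X·P0·X·E)·E(t)ψ̄⟩ = sin²(2ωt)`. -/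
theorem rotated_error_class1 {N : ℕ} (hN : 0 < N)
    (H X : Matrix (Fin N) (Fin N) ℂ)
    (hHh : Hᴴ = H) (hXh : Xᴴ = X)
    (hH2 : H * H = 1) (hX2 : X * X = 1) (hHX : H * X = -(X * H))
    (ω θ ωH : ℝ) (hω : 0 < ω) (hωH : ωH = θ * ω / (2 * Real.pi))
    (θbar : ℝ → ℝ) (hθbar : ∀ t, θbar t = θ / (4 * Real.pi) * Real.sin (2 * ω * t))
    (V U : ℝ → Matrix (Fin N) (Fin N) ℂ)
    (hV : ∀ t : ℝ, V t = NormedSpace.exp ((Complex.I * (ωH * t)) • H) *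
      NormedSpace.exp ((Complex.I * (ω * t)) • X))
    (hU : ∀ t : ℝ, U t = V t * NormedSpace.exp ((-(Complex.I * (θbar t : ℝ))) • H))
    (P0 : Matrix (Fin N) (Fin N) ℂ)
    (hP0proj : P0 * P0 = P0) (hP0herm : P0ᴴ = P0)
    (hP0H : P0 * H = H * P0) (hPXP : P0 * X * P0 = 0) (hPHXP : P0 * H * X * P0 = 0)
    (E : Matrix (Fin N) (Fin N) ℂ)
    (hEh : Eᴴ = E) (hE2 : E * E = 1)
    (hEH : E * H = H * E) (hEX : E * X = -(X * E))
    (Et : ℝ → Matrix (Fin N) (Fin N) ℂ)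
    (hEt : ∀ t : ℝ, Et t = (U t)ᴴ * E * U t)
    (ψ : Fin N → ℂ) (hψ : star ψ ⬝ᵥ ψ = 1) (hPψ : P0 *ᵥ ψ = ψ) :
    ∀ t : ℝ,
      Et t = ((Real.cos (2 * ω * t) : ℝ) : ℂ) • E
          + (Complex.I * ((Real.sin (2 * ω * t) : ℝ) : ℂ)) •
              (NormedSpace.exp ((2 * Complex.I * (θbar t : ℝ)) • H) * E * X) ∧
      star (Et t *ᵥ ψ) ⬝ᵥ ((E * X * P0 * X * E) *ᵥ (Et t *ᵥ ψ))
        = ((Real.sin (2 * ω * t) ^ 2 : ℝ) : ℂ) := by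
  intro t
  have hconj : ∀ x : ℝ, starRingEnd ℂ (Complex.I * (x : ℂ)) = -(Complex.I * (x : ℂ)) := by
    intro x
    simp [Complex.conj_ofReal]
  -- Part (i)
  have hi : Et t = ((Real.cos (2 * ω * t) : ℝ) : ℂ) • E
      + (Complex.I * ((Real.sin (2 * ω * t) : ℝ) : ℂ)) •
          (NormedSpace.exp ((2 * Complex.I * (θbar t : ℝ)) • H) * E * X) := by
    rw [hEt, hU, hV,
      rotate_calc H X E hH2 hX2 hHh hXh hHX hEH hEX
        (Complex.I * ((ωH : ℂ) * (t : ℂ))) (Complex.I * ((ω : ℂ) * (t : ℂ)))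
        (Complex.I * ((θbar t : ℝ) : ℂ)) (by simpa using hconj (ωH * t))
        (by simpa using hconj (ω * t)) (hconj (θbar t))]
    have h1 : Complex.I * ((ω : ℂ) * (t : ℂ)) + Complex.I * ((ω : ℂ) * (t : ℂ))
        = ((2 * ω * t : ℝ) : ℂ) * Complex.I := by push_cast; ring
    have h2 : Complex.I * ((θbar t : ℝ) : ℂ) + Complex.I * ((θbar t : ℝ) : ℂ)
        = 2 * Complex.I * ((θbar t : ℝ) : ℂ) := by ring
    rw [h1, h2, Complex.cosh_mul_I, Complex.sinh_mul_I, ← Complex.ofReal_cos,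
      ← Complex.ofReal_sin, ← Matrix.mul_assoc,
      mul_comm (((Real.sin (2 * ω * t) : ℝ) : ℂ)) Complex.I]
  refine ⟨hi, ?_⟩
  -- Part (ii)
  have hEtH : (Et t)ᴴ = Et t := by
    rw [hEt]
    simp only [conjTranspose_mul, conjTranspose_conjTranspose, hEh, Matrix.mul_assoc]
  have hi' : Et t = ((Real.cos (2 * ω * t) : ℝ) : ℂ) • E
      + (Complex.I * ((Real.sin (2 * ω * t) : ℝ) : ℂ)) •
          (NormedSpace.exp ((2 * Complex.I * (θbar t : ℝ)) • H) * (E * X)) := by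
    rw [hi, Matrix.mul_assoc]
  rw [star_mulVec, hEtH, ← dotProduct_mulVec, ← hPψ, star_mulVec, hP0herm,
    ← dotProduct_mulVec, mulVec_mulVec, mulVec_mulVec, mulVec_mulVec, mulVec_mulVec]
  rw [show P0 * Et t * (E * X * P0 * X * E) * Et t * P0
      = P0 * (Et t * ((E * X * P0 * X * E) * (Et t * P0))) from by
    simp only [Matrix.mul_assoc]]
  rw [hi', sandwich_calc H X E P0 hH2 hX2 hE2 hHX hEH hEX hP0proj hP0H hPXP]
  rw [smul_mulVec, hPψ, dotProduct_smul, hψ, smul_eq_mul, mul_one]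
  have : Complex.I * ((Real.sin (2 * ω * t) : ℝ) : ℂ) * (Complex.I * ((Real.sin (2 * ω * t) : ℝ) : ℂ))
      = -(((Real.sin (2 * ω * t) ^ 2 : ℝ) : ℂ)) := by
    push_cast
    rw [show ∀ s : ℂ, Complex.I * s * (Complex.I * s) = Complex.I ^ 2 * s ^ 2 from fun s => by ring,
      Complex.I_sq]
    ring
  rw [this, neg_neg]
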